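/- If |z| < √2 − 1, then |arg((1+z)/(1−z))| < π/4; equivalently, Re(((1+z)/(1−z))²) > 0 for |z| < √2 − 1. -/

import Mathlib

open Complex

theorem arg_lt_pi_div_four (z : ℂ) (hz : ‖z‖ < Real.sqrt 2 - 1) :
    |Complex.arg ((1 + z) / (1 - z))| < Real.pi / 4 ∧
      0 < ((((1 + z) / (1 - z)) ^ 2).re) := by
  have hsq2 : Real.sqrt 2 ^ 2 = 2 := Real.sq_sqrt (by norm_num)
  have hs2 : (1:ℝ) < Real.sqrt 2 := by nlinarith [Real.sqrt_nonneg 2]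
  have hs2' : Real.sqrt 2 < 2 := by nlinarith [Real.sqrt_nonneg 2]
  have habs := norm_nonneg z
  set a := z.re with ha
  set b := z.im with hb
  have h3 : a ^ 2 + b ^ 2 = ‖z‖ ^ 2 := by
    rw [Complex.sq_norm, Complex.normSq_apply]; ring
  have hn : a ^ 2 + b ^ 2 < 3 - 2 * Real.sqrt 2 := by nlinarith
  have hbz : |b| ≤ ‖z‖ := Complex.abs_im_le_norm z
  have hkey : 2 * |b| < 1 - a ^ 2 - b ^ 2 := by nlinarith
  have hz1 : ‖z‖ < 1 := by linarith
  have hne : (1 - z) ≠ 0 := by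
    intro h
    have : z = 1 := by linear_combination -h
    rw [this] at hz1; simp at hz1
  set N := Complex.normSq (1 - z) with hN
  have hNpos : 0 < N := Complex.normSq_pos.mpr hne
  set w := (1 + z) / (1 - z) with hw
  have hwre : w.re = (1 - a ^ 2 - b ^ 2) / N := by
    rw [hw, Complex.div_re]
    simp [Complex.add_re, Complex.add_im, Complex.sub_re, Complex.sub_im, ha, hb]
    ring
  have hwim : w.im = 2 * b / N := by
    rw [hw, Complex.div_im]
    simp [Complex.add_re, Complex.add_im, Complex.sub_re, Complex.sub_im, ha, hb]
    ring
  have hrepos : 0 < w.re := by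
    rw [hwre]
    apply div_pos _ hNpos
    have : 0 ≤ |b| := abs_nonneg b
    linarith
  have himlt : |w.im| < w.re := by
    rw [hwim, hwre, abs_div, abs_of_pos hNpos]
    apply (div_lt_div_iff_of_pos_right hNpos).mpr
    rw [abs_mul, abs_of_pos (by norm_num : (0:ℝ) < 2)]
    exact hkey
  constructor
  · -- arg part
    have harg : Complex.arg w = Real.arcsin (w.im / ‖w‖) :=
      Complex.arg_of_re_nonneg hrepos.le
    have hawpos : 0 < ‖w‖ := by
      apply norm_pos_iff.mpr
      intro h; rw [h] at hrepos; simp at hrepos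
    have hfrac : |w.im / ‖w‖| < Real.sqrt 2 / 2 := by
      rw [abs_div, abs_of_pos hawpos, div_lt_div_iff₀ hawpos (by norm_num : (0:ℝ) < 2)]
      have hsq : ‖w‖ ^ 2 = w.re ^ 2 + w.im ^ 2 := by
        rw [Complex.sq_norm, Complex.normSq_apply]; ring
      have hprod : 0 < (w.re - |w.im|) * (w.re + |w.im|) :=
        mul_pos (sub_pos.mpr himlt)
          (lt_of_lt_of_le hrepos (le_add_of_nonneg_right (abs_nonneg w.im)))
      have h2im : 2 * w.im ^ 2 < ‖w‖ ^ 2 := by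
        nlinarith [_root_.sq_abs w.im]
      apply lt_of_pow_lt_pow_left₀ 2 (by positivity)
      nlinarith [_root_.sq_abs w.im]
    have hπ := Real.pi_pos
    rw [harg, abs_lt]
    obtain ⟨hf1, hf2⟩ := abs_lt.mp hfrac
    constructor
    · rw [Real.lt_arcsin_iff_sin_lt' (by constructor <;> [linarith; linarith])]
      rw [Real.sin_neg, Real.sin_pi_div_four]
      linarith
    · rw [Real.arcsin_lt_iff_lt_sin' (by constructor <;> [linarith; linarith])]
      rw [Real.sin_pi_div_four]
      linarith
  · -- Re part
    have h2 : (w ^ 2).re = w.re ^ 2 - w.im ^ 2 := by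
      rw [pow_two, Complex.mul_re]; ring
    rw [h2]
    nlinarith [abs_nonneg w.im, _root_.sq_abs w.im]
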